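/- With the setup of a system of Zariski decompositions (V a real vector space with basis (e_λ), functionals φ_λ with φ_λ(e_μ) ≥ 0 for λ ≠ μ), assume additionally that φ_λ(e_μ) ∈ ℚ for all λ, μ. Let x ∈ V have all coordinates rational and admit a Zariski decomposition x = y + z (y nef, z ≥ 0, φ_λ(y) = 0 for λ ∈ Supp(z), and the cone condition: the only w ∈ Σ_{λ∈Supp(z)} ℝ_{≥0}e_λ with φ_λ(w) ≥ 0 for all λ ∈ Supp(z) is w = 0). Then all coordinates of y and of z are rational. -/

import Mathlib

/-- `x = y + z` is a Zariski decomposition with respect to the system given by the basis `B`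
and the linear functionals `φ`. -/
def IsZariskiDecomposition {Λ V : Type*} [AddCommGroup V] [Module ℝ V]
    (B : Module.Basis Λ ℝ V) (φ : Λ → V →ₗ[ℝ] ℝ) (x y z : V) : Prop :=
  x = y + z ∧
  (∀ l, 0 ≤ φ l y) ∧
  (∀ l, 0 ≤ B.repr z l) ∧
  (∀ l, B.repr z l ≠ 0 → φ l y = 0) ∧
  (∀ w : V, (∀ l, 0 ≤ B.repr w l) → (∀ l, B.repr w l ≠ 0 → B.repr z l ≠ 0) →
    (∀ l, B.repr z l ≠ 0 → 0 ≤ φ l w) → w = 0)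

theorem stmt18 {Λ V : Type*} [AddCommGroup V] [Module ℝ V]
    (B : Module.Basis Λ ℝ V) (φ : Λ → V →ₗ[ℝ] ℝ)
    (hφ : ∀ l m : Λ, l ≠ m → 0 ≤ φ l (B m))
    (hq : ∀ l m : Λ, ∃ q : ℚ, φ l (B m) = (q : ℝ))
    (x y z : V)
    (hx : ∀ l, ∃ q : ℚ, B.repr x l = (q : ℝ))
    (h : IsZariskiDecomposition B φ x y z) :
    (∀ l, ∃ q : ℚ, B.repr y l = (q : ℝ)) ∧ (∀ l, ∃ q : ℚ, B.repr z l = (q : ℝ)) := by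
  classical
  obtain ⟨hxyz, hnef, hzpos, hsupp, hcone⟩ := h
  set S : Finset Λ := (B.repr z).support with hS
  have hrepr : ∀ (c : S → ℝ) (l : Λ),
      B.repr (∑ m : S, c m • B (m : Λ)) l = if h : l ∈ S then c ⟨l, h⟩ else 0 := by
    intro c l
    rw [map_sum, Finsupp.finset_sum_apply]
    simp only [map_smul, Module.Basis.repr_self, Finsupp.smul_single, smul_eq_mul, mul_one,
      Finsupp.single_apply]
    split_ifs with hl
    · rw [Finset.sum_eq_single (⟨l, hl⟩ : S)]
      · simp
      · intro m _ hne
        rw [if_neg]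
        intro hh; exact hne (Subtype.ext hh)
      · intro hh; exact absurd (Finset.mem_univ _) hh
    · apply Finset.sum_eq_zero
      intro m _
      rw [if_neg]
      intro hh; exact hl (hh ▸ m.2)
  have hphi : ∀ (c : S → ℝ) (l : Λ),
      φ l (∑ m : S, c m • B (m : Λ)) = ∑ m : S, c m * φ l (B (m : Λ)) := by
    intro c l
    rw [map_sum]
    simp [smul_eq_mul]
  set M : Matrix S S ℝ := Matrix.of fun l m => φ l (B (m : Λ)) with hM
  have haux : ∀ v : S → ℝ, M.mulVec v = 0 → ∀ m, v m ≤ 0 := by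
    intro v hv m₀
    set c : S → ℝ := fun m => max (v m) 0 with hc
    set d : S → ℝ := fun m => max (-(v m)) 0 with hd
    set wp : V := ∑ m : S, c m • B (m : Λ) with hwp
    set wn : V := ∑ m : S, d m • B (m : Λ) with hwn
    have hcd : ∀ m, c m - d m = v m := by
      intro m; simp only [hc, hd, max_def]; split_ifs with h1 h2 <;> simp <;> linarith
    have hphiv : ∀ l : S, φ (l : Λ) (wp - wn) = 0 := by
      intro l
      have h1 : φ (l : Λ) (wp - wn) = ∑ m : S, v m * φ (l : Λ) (B (m : Λ)) := by
        rw [map_sub, hphi, hphi, ← Finset.sum_sub_distrib]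
        exact Finset.sum_congr rfl fun m _ => by rw [← sub_mul, hcd]
      rw [h1]
      have h2 := congrFun hv l
      simpa [Matrix.mulVec, dotProduct, hM, mul_comm] using h2
    have hwp0 : wp = 0 := by
      apply hcone
      · intro l
        rw [hrepr]
        split_ifs with hl
        · exact le_max_right _ _
        · exact le_refl 0
      · intro l hl
        rw [hrepr] at hl
        split_ifs at hl with hmem
        · exact Finsupp.mem_support_iff.mp hmem
        · exact absurd rfl hl
      · intro l hl
        have hlS : l ∈ S := Finsupp.mem_support_iff.mpr hl
        rcases le_or_gt (v ⟨l, hlS⟩) 0 with hvl | hvl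
        · rw [hphi]
          apply Finset.sum_nonneg
          intro mm _
          rcases eq_or_ne mm (⟨l, hlS⟩ : S) with heq | hne
          · have hc0 : c mm = 0 := by rw [heq]; simp [hc, max_eq_right hvl]
            simp [hc0]
          · have hml : (mm : Λ) ≠ l := fun hh => hne (Subtype.ext hh)
            exact mul_nonneg (le_max_right _ _) (hφ l (mm : Λ) (Ne.symm hml))
        · have h1 : φ l wp = φ l wn := by
            have h2 : φ l wp - φ l wn = 0 := by rw [← map_sub]; exact hphiv ⟨l, hlS⟩
            linarith
          rw [h1, hphi]
          apply Finset.sum_nonneg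
          intro mm _
          rcases eq_or_ne mm (⟨l, hlS⟩ : S) with heq | hne
          · have hd0 : d mm = 0 := by
              rw [heq]; simp only [hd]; exact max_eq_right (by linarith)
            simp [hd0]
          · have hml : (mm : Λ) ≠ l := fun hh => hne (Subtype.ext hh)
            exact mul_nonneg (le_max_right _ _) (hφ l (mm : Λ) (Ne.symm hml))
    have h1 := hrepr c (m₀ : Λ)
    rw [← hwp, hwp0, map_zero, dif_pos m₀.2] at h1
    have hc0 : c m₀ = 0 := by
      have : (⟨(m₀ : Λ), m₀.2⟩ : S) = m₀ := Subtype.ext rfl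
      rw [this] at h1
      simpa using h1.symm
    calc v m₀ ≤ max (v m₀) 0 := le_max_left _ _
    _ = 0 := hc0
  have hinj : ∀ v : S → ℝ, M.mulVec v = 0 → v = 0 := by
    intro v hv
    funext m
    have h1 := haux v hv m
    have h2 : M.mulVec (-v) = 0 := by rw [Matrix.mulVec_neg, hv, neg_zero]
    have h3 := haux (-v) h2 m
    simp only [Pi.neg_apply, neg_nonpos] at h3
    exact le_antisymm h1 h3
  have hdet : M.det ≠ 0 := by
    intro hd
    obtain ⟨v, hv0, hv⟩ := Matrix.exists_mulVec_eq_zero_iff.mpr hd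
    exact hv0 (hinj v hv)
  choose qφ hqφ using hq
  set Mq : Matrix S S ℚ := Matrix.of fun l m => qφ l (m : Λ) with hMq
  have hMcast : M = Mq.map (Rat.cast) := by
    funext l m
    simp [hM, hMq, Matrix.map_apply, hqφ]
  have hdetcast : ((Mq.det : ℚ) : ℝ) = M.det := by
    rw [hMcast]
    exact (Rat.castHom ℝ).map_det Mq
  have hMqdet : Mq.det ≠ 0 := by
    intro hd
    apply hdet
    rw [← hdetcast, hd]
    norm_num
  set v : S → ℝ := fun m => B.repr z (m : Λ) with hv
  have hz : z = ∑ m : S, v m • B (m : Λ) := by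
    apply B.repr.injective
    ext l
    rw [hrepr]
    split_ifs with hl
    · rfl
    · exact Finsupp.notMem_support_iff.mp hl
  choose qx hqx using hx
  set b : S → ℝ := fun l => φ (l : Λ) x with hb
  have hbrat : ∀ l : S, ∃ qb : ℚ, b l = (qb : ℝ) := by
    intro l
    have hxsum : φ (l : Λ) x = (B.repr x).sum fun m cc => cc * φ (l : Λ) (B m) := by
      conv_lhs => rw [← B.linearCombination_repr x]
      rw [Finsupp.linearCombination_apply, map_finsuppSum]
      simp [smul_eq_mul]
    refine ⟨∑ m ∈ (B.repr x).support, qx m * qφ (l : Λ) m, ?_⟩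
    show φ (l : Λ) x = _
    rw [hxsum, Finsupp.sum]
    push_cast
    exact Finset.sum_congr rfl fun m _ => by rw [hqx, hqφ]
  choose bq hbq using hbrat
  have hMv : M.mulVec v = b := by
    funext l
    have h0 : φ (l : Λ) y = 0 := hsupp l (Finsupp.mem_support_iff.mp l.2)
    have h1 : b l = φ (l : Λ) z := by
      show φ (l : Λ) x = _
      rw [hxyz, map_add, h0, zero_add]
    rw [h1, hz, hphi]
    simp [Matrix.mulVec, dotProduct, hM, mul_comm]
  set vq : S → ℚ := Mq⁻¹.mulVec bq with hvq
  have hMqv : Mq.mulVec vq = bq := by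
    rw [hvq, Matrix.mulVec_mulVec,
      Matrix.mul_nonsing_inv _ (isUnit_iff_ne_zero.mpr hMqdet), Matrix.one_mulVec]
  have hcastv : M.mulVec (fun m => ((vq m : ℝ))) = b := by
    funext l
    have h1 := congrFun hMqv l
    simp only [Matrix.mulVec, dotProduct] at h1 ⊢
    rw [hbq l, ← h1]
    push_cast
    exact Finset.sum_congr rfl fun m _ => by rw [hMcast]; simp [Matrix.map_apply]
  have hveq : v = fun m => ((vq m : ℝ)) := by
    have h1 : M.mulVec (v - fun m => ((vq m : ℝ))) = 0 := by
      rw [Matrix.mulVec_sub, hMv, hcastv, sub_self]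
    have h2 := hinj _ h1
    funext m
    have h3 := congrFun h2 m
    simp only [Pi.sub_apply, Pi.zero_apply, sub_eq_zero] at h3
    exact h3
  have hzrat : ∀ l, ∃ q : ℚ, B.repr z l = (q : ℝ) := by
    intro l
    by_cases hl : l ∈ S
    · exact ⟨vq ⟨l, hl⟩, by rw [show B.repr z l = v ⟨l, hl⟩ from rfl, hveq]⟩
    · exact ⟨0, by simpa using Finsupp.notMem_support_iff.mp hl⟩
  refine ⟨?_, hzrat⟩
  intro l
  obtain ⟨qz, hqz⟩ := hzrat l
  refine ⟨qx l - qz, ?_⟩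
  have hy : y = x - z := by rw [hxyz]; abel
  rw [hy, map_sub, Finsupp.sub_apply, hqx, hqz]
  push_cast
  ring
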